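/- Let β1, β2, L2 be real constants with L2 ≠ 0, Δ = β2² − 4 β1 L2 = 0 and β2 L2 < 0. Then y = −β2/(2 L2) > 0, ρ* = √y is a fixed point of g, for every ρ one has g(ρ) − ρ = L2 ρ (ρ² − y)², and ρ* is an unstable fixed point: there exists ε > 0 such that for every δ > 0 there is ρ0 with 0 < |ρ0 − ρ*| < δ whose orbit under g has some iterate at distance at least ε from ρ*. -/

import Mathlib

/-- For the truncated ρ-map `g ρ = ρ (1 + β1 + β2 ρ² + L2 ρ⁴)` with `L2 ≠ 0`,
zero discriminant `Δ = β2² − 4 β1 L2 = 0` and `β2 L2 < 0`: the double root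
`y = −β2/(2 L2)` is positive, `ρ* = √y` is a fixed point of `g`, one has
`g(ρ) − ρ = L2 ρ (ρ² − y)²` for every `ρ`, and `ρ*` is an unstable fixed
point. -/
theorem chenciner_circle_on_zero_discriminant
    (β1 β2 L2 : ℝ) (hL2 : L2 ≠ 0)
    (hΔ : β2 ^ 2 - 4 * β1 * L2 = 0) (hβ2L2 : β2 * L2 < 0)
    (g : ℝ → ℝ)
    (hg : ∀ ρ : ℝ, g ρ = ρ * (1 + β1 + β2 * ρ ^ 2 + L2 * ρ ^ 4)) :
    let y := -β2 / (2 * L2)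
    let ρs := Real.sqrt y
    0 < y ∧
    g ρs = ρs ∧
    (∀ ρ : ℝ, g ρ - ρ = L2 * ρ * (ρ ^ 2 - y) ^ 2) ∧
    ∃ ε > (0 : ℝ), ∀ δ > (0 : ℝ), ∃ ρ0 : ℝ,
      0 < |ρ0 - ρs| ∧ |ρ0 - ρs| < δ ∧ ∃ n : ℕ, ε ≤ |g^[n] ρ0 - ρs| := by
  intro y ρs
  have hL2sq : 0 < L2 ^ 2 := by positivity
  have hy : 0 < y := by
    have h1 : y = (-(β2 * L2)) / (2 * L2 ^ 2) := by
      show -β2 / (2 * L2) = _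
      field_simp
    rw [h1]
    apply div_pos (by linarith) (by positivity)
  have hys : ρs ^ 2 = y := Real.sq_sqrt hy.le
  have hρs : 0 < ρs := Real.sqrt_pos.mpr hy
  have key : ∀ ρ : ℝ, g ρ - ρ = L2 * ρ * (ρ ^ 2 - y) ^ 2 := by
    intro ρ
    rw [hg]
    show _ = L2 * ρ * (ρ ^ 2 - -β2 / (2 * L2)) ^ 2
    field_simp
    linear_combination (-ρ) * hΔ
  have fix : g ρs = ρs := by
    have h := key ρs
    rw [hys, sub_self] at h
    linarith
  refine ⟨hy, fix, key, ρs / 2, by positivity, ?_⟩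
  intro δ hδ
  set c : ℝ := min δ (ρs / 2) / 2 with hc
  have hc0 : 0 < c := by positivity
  have hcδ : c < δ := by
    have h := min_le_left δ (ρs / 2)
    rw [hc]; linarith
  have hcε : c < ρs / 2 := by
    have h := min_le_right δ (ρs / 2)
    rw [hc]; linarith
  rcases lt_or_gt_of_ne hL2 with hL | hL
  · -- L2 < 0 : orbit drifts down from ρs - c
    set ρ0 : ℝ := ρs - c with hρ0
    set K : ℝ := (-L2) * (ρs / 2) * (c * ρs) ^ 2 with hK
    have hK0 : 0 < K := by
      have hnl : 0 < -L2 := by linarith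
      positivity
    have habs : |ρ0 - ρs| = c := by
      rw [hρ0, show ρs - c - ρs = -c by ring, abs_neg, abs_of_pos hc0]
    refine ⟨ρ0, by rw [habs]; exact hc0, by rw [habs]; exact hcδ, ?_⟩
    have step : ∀ a : ℝ, ρs / 2 < a → a ≤ ρs - c → g a ≤ a - K := by
      intro a h1 h2
      have hk := key a
      have hA : c * ρs ≤ (ρs - a) * (ρs + a) :=
        mul_le_mul (by linarith) (by linarith) hρs.le (by linarith)
      have hsq : (c * ρs) ^ 2 ≤ (a ^ 2 - y) ^ 2 := by
        rw [← hys]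
        have h3 := pow_le_pow_left₀ (by positivity) hA 2
        have h4 : ((ρs - a) * (ρs + a)) ^ 2 = (a ^ 2 - ρs ^ 2) ^ 2 := by ring
        linarith
      have h4 : (ρs / 2) * (c * ρs) ^ 2 ≤ a * (a ^ 2 - y) ^ 2 :=
        mul_le_mul h1.le hsq (by positivity) (by linarith)
      have h5 := mul_le_mul_of_nonpos_left h4 hL.le
      rw [← mul_assoc, ← mul_assoc] at h5
      have h6 : L2 * (ρs / 2) * (c * ρs) ^ 2 = -K := by rw [hK]; ring
      linarith
    have main : ∀ n : ℕ, (∃ m : ℕ, ρs / 2 ≤ |g^[m] ρ0 - ρs|) ∨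
        (ρs / 2 < g^[n] ρ0 ∧ g^[n] ρ0 ≤ ρs - c - n * K) := by
      intro n
      induction n with
      | zero =>
        right
        simp only [Function.iterate_zero_apply, Nat.cast_zero, zero_mul, sub_zero]
        exact ⟨by rw [hρ0]; linarith, le_of_eq hρ0⟩
      | succ n ih =>
        rcases ih with h | ⟨h1, h2⟩
        · exact Or.inl h
        · have hn0 : (0 : ℝ) ≤ n * K := mul_nonneg (Nat.cast_nonneg n) hK0.le
          have hstep := step _ h1 (by linarith)
          rw [← Function.iterate_succ_apply' g n ρ0] at hstep
          rcases le_or_gt (g^[n+1] ρ0) (ρs / 2) with h3 | h3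
          · left
            exact ⟨n + 1, by rw [abs_sub_comm, abs_of_nonneg (by linarith)]; linarith⟩
          · right
            refine ⟨h3, ?_⟩
            push_cast
            linarith
    obtain ⟨N, hN⟩ := exists_nat_ge (ρs / K)
    rcases main N with ⟨m, hm⟩ | ⟨h1, h2⟩
    · exact ⟨m, hm⟩
    · exfalso
      rw [div_le_iff₀ hK0] at hN
      have hn0 : (0 : ℝ) ≤ N * K := mul_nonneg (Nat.cast_nonneg N) hK0.le
      linarith
  · -- L2 > 0 : orbit drifts up from ρs + c
    set ρ0 : ℝ := ρs + c with hρ0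
    set K : ℝ := L2 * (ρs / 2) * (c * ρs) ^ 2 with hK
    have hK0 : 0 < K := by positivity
    have habs : |ρ0 - ρs| = c := by
      rw [hρ0, show ρs + c - ρs = c by ring, abs_of_pos hc0]
    refine ⟨ρ0, by rw [habs]; exact hc0, by rw [habs]; exact hcδ, ?_⟩
    have step : ∀ a : ℝ, ρs + c ≤ a → a + K ≤ g a := by
      intro a h1
      have hk := key a
      have hA : c * ρs ≤ (a - ρs) * (a + ρs) :=
        mul_le_mul (by linarith) (by linarith) hρs.le (by linarith)
      have hsq : (c * ρs) ^ 2 ≤ (a ^ 2 - y) ^ 2 := by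
        rw [← hys]
        have h3 := pow_le_pow_left₀ (by positivity) hA 2
        have h4 : ((a - ρs) * (a + ρs)) ^ 2 = (a ^ 2 - ρs ^ 2) ^ 2 := by ring
        linarith
      have h4 : (ρs / 2) * (c * ρs) ^ 2 ≤ a * (a ^ 2 - y) ^ 2 :=
        mul_le_mul (by linarith) hsq (by positivity) (by linarith)
      have h5 := mul_le_mul_of_nonneg_left h4 hL.le
      rw [← mul_assoc, ← mul_assoc] at h5
      linarith
    have main : ∀ n : ℕ, ρs + c + n * K ≤ g^[n] ρ0 := by
      intro n
      induction n with
      | zero =>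
        simp only [Function.iterate_zero_apply, Nat.cast_zero, zero_mul, add_zero]
        exact le_of_eq hρ0.symm
      | succ n ih =>
        have hn0 : (0 : ℝ) ≤ n * K := mul_nonneg (Nat.cast_nonneg n) hK0.le
        have hstep := step _ (by linarith)
        rw [← Function.iterate_succ_apply' g n ρ0] at hstep
        push_cast
        linarith
    obtain ⟨N, hN⟩ := exists_nat_ge (ρs / K)
    refine ⟨N, ?_⟩
    have h1 := main N
    rw [div_le_iff₀ hK0] at hN
    have hn0 : (0 : ℝ) ≤ N * K := mul_nonneg (Nat.cast_nonneg N) hK0.le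
    rw [abs_of_nonneg (by linarith)]
    linarith
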